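/- Any matrix A ∈ 𝐔_m all of whose entries are equal to either 0 or 1 is an extreme point of the convex set 𝐔_m. -/

import Mathlib

open Matrix Finset

def IsInU {m : ℕ} (A : Matrix (Fin m) (Fin m) ℝ) : Prop :=
  A.IsSymm ∧ (∀ i j, 0 ≤ A i j) ∧
    ∀ α : Finset (Fin m), ∑ i ∈ α, ∑ j ∈ α, A i j ≤ (α.card : ℝ)

def IsInUtop {m : ℕ} (A : Matrix (Fin m) (Fin m) ℝ) : Prop :=
  IsInU A ∧ ∑ i, ∑ j, A i j = (m : ℝ)

def IsExtremeIn {m : ℕ} (S : Matrix (Fin m) (Fin m) ℝ → Prop)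
    (A : Matrix (Fin m) (Fin m) ℝ) : Prop :=
  S A ∧ ∀ A₁ A₂, S A₁ → S A₂ → A₁ + A₂ = (2 : ℝ) • A → A₁ = A ∧ A₂ = A

def IsRowStochastic {m : ℕ} (X : Matrix (Fin m) (Fin m) ℝ) : Prop :=
  (∀ i j, 0 ≤ X i j) ∧ ∀ i, ∑ j, X i j = 1

def IsSubstochastic {m : ℕ} (X : Matrix (Fin m) (Fin m) ℝ) : Prop :=
  (∀ i j, 0 ≤ X i j) ∧ ∀ i, ∑ j, X i j ≤ 1

lemma entry_le_one {m : ℕ} (X : Matrix (Fin m) (Fin m) ℝ) (hX : IsInU X)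
    (i j : Fin m) : X i j ≤ 1 := by
  obtain ⟨hs, hnn, hsum⟩ := hX
  by_cases h : i = j
  · subst h
    have := hsum {i}
    simpa using this
  · have hcard : ({i, j} : Finset (Fin m)).card = 2 := by
      rw [Finset.card_insert_of_notMem (by simpa using h), Finset.card_singleton]
    have hsym : X j i = X i j := hs.apply i j
    have h2 := hsum {i, j}
    rw [hcard] at h2
    rw [Finset.sum_pair h, Finset.sum_pair h, Finset.sum_pair h] at h2
    have h1 := hnn i i
    have h3 := hnn j j
    push_cast at h2
    linarith

theorem stmt_8 {m : ℕ} (A : Matrix (Fin m) (Fin m) ℝ) (hA : IsInU A)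
    (hval : ∀ i j, A i j = 0 ∨ A i j = 1) :
    IsExtremeIn IsInU A := by
  refine ⟨hA, fun A₁ A₂ h1 h2 hsum => ?_⟩
  have key : A₁ = A := by
    ext i j
    have heq : A₁ i j + A₂ i j = 2 * A i j := by
      have := congrFun (congrFun hsum i) j
      simpa [Matrix.add_apply] using this
    have hb1 := entry_le_one A₁ h1 i j
    have hb2 := entry_le_one A₂ h2 i j
    have hn1 := h1.2.1 i j
    have hn2 := h2.2.1 i j
    rcases hval i j with h0 | h0 <;> rw [h0] <;> rw [h0] at heq <;> linarith
  refine ⟨key, ?_⟩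
  ext i j
  have heq : A₁ i j + A₂ i j = 2 * A i j := by
    have := congrFun (congrFun hsum i) j
    simpa [Matrix.add_apply] using this
  have := congrFun (congrFun key i) j
  linarith
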